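/- Define mmse_BPSK(γ) = (1/√(πγ)) e^{-γ} ∫_{-∞}^∞ (1/cosh(2z)) e^{-z²/γ} dz for γ > 0. Then for all γ > 0, mmse_BPSK(γ) ≥ (1 - (1/(2γ))·(π²/8)) · (√π/2)·(1/√γ)·e^{-γ}. -/

import Mathlib

open Real MeasureTheory Filter Set

lemma sech_le_two_exp (x : ℝ) : 1 / Real.cosh x ≤ 2 * Real.exp (-x) := by
  rw [Real.cosh_eq, div_le_iff₀ (by positivity)]
  have h1 : Real.exp (-x) * Real.exp x = 1 := by rw [← Real.exp_add]; simp
  nlinarith [sq_nonneg (Real.exp x - Real.exp (-x)), Real.exp_pos (-x), Real.exp_pos x]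

lemma sech_pos (x : ℝ) : 0 < 1 / Real.cosh x := by positivity

lemma sech_le_one (x : ℝ) : 1 / Real.cosh x ≤ 1 := by
  rw [div_le_one (Real.cosh_pos _)]; exact Real.one_le_cosh x

lemma sq_le_four_exp (x : ℝ) (hx : 0 ≤ x) : x ^ 2 ≤ 4 * Real.exp x := by
  have h := Real.add_one_le_exp (x / 2)
  have h2 : Real.exp x = Real.exp (x/2) * Real.exp (x/2) := by rw [← Real.exp_add]; ring_nf
  nlinarith [Real.exp_pos (x/2)]

lemma cont_sech : Continuous fun z : ℝ => 1 / Real.cosh (2 * z) := by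
  exact continuous_const.div (Real.continuous_cosh.comp (continuous_const.mul continuous_id))
    (fun x => (Real.cosh_pos _).ne')

/-- helper: even continuous functions that are `O(exp (-x))` at `+∞` are integrable. -/
lemma integrable_of_even_bigO {f : ℝ → ℝ} (hc : Continuous f) (he : ∀ x, f (-x) = f x)
    (C : ℝ) (hO : ∀ x : ℝ, 0 ≤ x → |f x| ≤ C * Real.exp (-x)) : Integrable f := by
  have hIoi : IntegrableOn f (Ioi 0) := by
    refine integrable_of_isBigO_exp_neg (one_pos) hc.continuousOn ?_
    rw [Asymptotics.isBigO_iff]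
    refine ⟨C, ?_⟩
    filter_upwards [eventually_ge_atTop (0:ℝ)] with x hx
    have := hO x hx
    rw [Real.norm_eq_abs, Real.norm_eq_abs, abs_of_pos (Real.exp_pos _),
      show (-1 : ℝ) * x = -x by ring]
    exact this
  rw [← integrableOn_univ, ← Iio_union_Ici (a := (0:ℝ)), integrableOn_union,
    integrableOn_Ici_iff_integrableOn_Ioi]
  refine ⟨?_, hIoi⟩
  rw [← (Measure.measurePreserving_neg (volume : Measure ℝ)).integrableOn_comp_preimage
      (Homeomorph.neg ℝ).measurableEmbedding]
  simp only [Function.comp_def, he, neg_preimage, neg_Iio, neg_zero]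
  exact hIoi

lemma integrable_sech : Integrable fun z : ℝ => 1 / Real.cosh (2 * z) := by
  refine integrable_of_even_bigO cont_sech (fun x => by rw [mul_neg, Real.cosh_neg]) 2 ?_
  intro x hx
  rw [abs_of_pos (sech_pos _)]
  calc 1 / Real.cosh (2 * x) ≤ 2 * Real.exp (-(2*x)) := sech_le_two_exp _
    _ ≤ 2 * Real.exp (-x) := by
        have h1 : Real.exp (-(2*x)) ≤ Real.exp (-x) := Real.exp_le_exp.mpr (by linarith)
        linarith

lemma integrable_sq_sech : Integrable fun z : ℝ => z ^ 2 * (1 / Real.cosh (2 * z)) := by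
  refine integrable_of_even_bigO ((continuous_pow 2).mul cont_sech)
    (fun x => by rw [mul_neg, Real.cosh_neg, neg_pow]; ring) 8 ?_
  intro x hx
  rw [abs_of_nonneg (by positivity)]
  calc x ^ 2 * (1 / Real.cosh (2 * x)) ≤ x ^ 2 * (2 * Real.exp (-(2*x))) :=
        mul_le_mul_of_nonneg_left (sech_le_two_exp _) (by positivity)
    _ ≤ 4 * Real.exp x * (2 * Real.exp (-(2*x))) :=
        mul_le_mul_of_nonneg_right (sq_le_four_exp x hx) (by positivity)
    _ = 8 * (Real.exp x * Real.exp (-(2*x)))  := by ring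
    _ = 8 * Real.exp (-x) := by rw [← Real.exp_add]; ring_nf

/-- `∫ 1/cosh(2z) = π/2` by FTC with antiderivative `arctan (sinh (2z)) / 2`. -/
lemma integral_sech : (∫ z : ℝ, 1 / Real.cosh (2 * z)) = π / 2 := by
  have hderiv : ∀ x : ℝ, HasDerivAt (fun z => Real.arctan (Real.sinh (2 * z)) / 2)
      (1 / Real.cosh (2 * x)) x := by
    intro x
    have h1 : HasDerivAt (fun z : ℝ => 2 * z) 2 x := by
      simpa using (hasDerivAt_id x).const_mul 2
    have h2 : HasDerivAt (fun z : ℝ => Real.sinh (2 * z)) (Real.cosh (2 * x) * 2) x :=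
      (Real.hasDerivAt_sinh (2 * x)).comp x h1
    have h3 := ((Real.hasDerivAt_arctan (Real.sinh (2 * x))).comp x h2).div_const 2
    refine h3.congr_deriv ?_
    have hc := Real.cosh_pos (x := 2 * x)
    rw [← Real.cosh_sq']
    field_simp
  have htop : Tendsto (fun z => Real.arctan (Real.sinh (2 * z)) / 2) atTop (nhds (π / 4)) := by
    have h1 : Tendsto (fun z : ℝ => Real.sinh (2 * z)) atTop atTop := by
      have hlin : Tendsto (fun z : ℝ => 2 * z) atTop atTop :=
        tendsto_id.const_mul_atTop (by norm_num)
      have hsinh : Tendsto Real.sinh atTop atTop := by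
        apply tendsto_atTop_mono' _ _ tendsto_id
        filter_upwards [eventually_ge_atTop (0:ℝ)] with x hx
        exact Real.self_le_sinh_iff.mpr hx
      exact hsinh.comp hlin
    have h2 := (tendsto_nhds_of_tendsto_nhdsWithin Real.tendsto_arctan_atTop).comp h1
    have := h2.div_const 2
    rw [show π / 4 = π / 2 / 2 by ring]
    exact this
  have hbot : Tendsto (fun z => Real.arctan (Real.sinh (2 * z)) / 2) atBot (nhds (-(π / 4))) := by
    have h1 : Tendsto (fun z : ℝ => Real.sinh (2 * z)) atBot atBot := by
      have hlin : Tendsto (fun z : ℝ => 2 * z) atBot atBot :=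
        tendsto_id.const_mul_atBot (by norm_num)
      have hsinh : Tendsto Real.sinh atBot atBot := by
        apply tendsto_atBot_mono' _ _ tendsto_id
        filter_upwards [eventually_le_atBot (0:ℝ)] with x hx
        exact Real.sinh_le_self_iff.mpr hx
      exact hsinh.comp hlin
    have h2 := (tendsto_nhds_of_tendsto_nhdsWithin Real.tendsto_arctan_atBot).comp h1
    have := h2.div_const 2
    rw [show -(π / 4) = -(π / 2) / 2 by ring]
    exact this
  have := MeasureTheory.integral_of_hasDerivAt_of_tendsto hderiv integrable_sech hbot htop
  rw [this]; ring

lemma hasSum_beta3 : HasSum (fun k : ℕ => (-1 : ℝ)^k / (2*k+1)^3) (π^3/32) := by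
  have H := hasSum_L_function_mod_four_eval_three
  rw [← hasSum_iff_hasSum_of_ne_zero_bij (f := fun n : ℕ => (1:ℝ)/(n:ℝ)^3 * Real.sin (π*n/2))
    (fun k => 2 * (k : ℕ) + 1) ?_ ?_ ?_]
  · exact H
  · intro a b hab
    have : 2 * (a : ℕ) + 1 = 2 * (b : ℕ) + 1 := hab
    exact Subtype.ext (by omega)
  · intro n hn
    rcases Nat.even_or_odd n with ⟨m, hm⟩ | ⟨m, hm⟩
    · exfalso
      apply hn
      have : Real.sin (π * n / 2) = 0 := by
        rw [hm]
        have : π * (↑(m + m)) / 2 = m * π := by push_cast; ring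
        rw [this, Real.sin_nat_mul_pi]
      simp [this]
    · have hg : ((-1 : ℝ)^m / (2*m+1)^3) ≠ 0 := by
        apply div_ne_zero
        · exact pow_ne_zero _ (by norm_num)
        · positivity
      exact ⟨⟨m, hg⟩, by simp only []; omega⟩
  · rintro ⟨k, hk⟩
    have hsin : Real.sin (π * (2 * (k:ℝ) + 1) / 2) = (-1 : ℝ)^k := by
      have h1 : π * (2 * (k:ℝ) + 1) / 2 = k * π + π / 2 := by ring
      rw [h1, Real.sin_add, Real.sin_nat_mul_pi, Real.cos_pi_div_two, Real.sin_pi_div_two]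
      have h2 : Real.cos ((k:ℝ) * π) = (-1:ℝ)^k := by
        have := Real.cos_nat_mul_pi_sub 0 k
        simpa using this
      simp [h2]
    simp only []
    push_cast
    rw [hsin]
    ring

lemma integrableOn_sq_exp {c : ℝ} (hc : 0 < c) :
    IntegrableOn (fun z : ℝ => z ^ 2 * Real.exp (-(c * z))) (Ioi 0) := by
  have h := integrableOn_rpow_mul_exp_neg_mul_rpow (p := 1) (s := 2) (b := c)
    (by norm_num) (by norm_num) hc
  refine h.congr_fun (fun x hx => ?_) measurableSet_Ioi
  dsimp only
  rw [Real.rpow_one]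
  norm_num [show ((2:ℝ) = ((2:ℕ):ℝ)) by norm_num, Real.rpow_natCast]

lemma integral_Ioi_sq_exp {c : ℝ} (hc : 0 < c) :
    ∫ z in Ioi (0:ℝ), z ^ 2 * Real.exp (-(c * z)) = 2 / c ^ 3 := by
  have h := Real.integral_rpow_mul_exp_neg_mul_Ioi (a := 3) (r := c) (by norm_num) hc
  have heq : ∫ t in Ioi (0:ℝ), t ^ ((3:ℝ) - 1) * Real.exp (-(c * t))
      = ∫ z in Ioi (0:ℝ), z ^ 2 * Real.exp (-(c * z)) := by
    refine setIntegral_congr_fun measurableSet_Ioi (fun x hx => ?_)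
    norm_num [show ((2:ℝ) = ((2:ℕ):ℝ)) by norm_num, Real.rpow_natCast]
  rw [heq] at h
  rw [h]
  have hG : Real.Gamma 3 = 2 := by
    rw [show (3:ℝ) = ((2:ℕ):ℝ) + 1 by norm_num, Real.Gamma_nat_eq_factorial]
    norm_num [Nat.factorial]
  rw [hG, show ((3:ℝ) = ((3:ℕ):ℝ)) by norm_num, Real.rpow_natCast]
  field_simp

lemma sech_series {z : ℝ} (hz : 0 < z) :
    z ^ 2 * (1 / Real.cosh (2 * z))
      = ∑' n : ℕ, ((-1 : ℝ) ^ n * 2) * (z ^ 2 * Real.exp (-((4 * n + 2) * z))) := by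
  have hr : ‖-Real.exp (-(4 * z))‖ < 1 := by
    rw [norm_neg, Real.norm_eq_abs, abs_of_pos (Real.exp_pos _)]
    exact Real.exp_lt_one_iff.mpr (by linarith)
  have geo := tsum_geometric_of_norm_lt_one hr
  have hterm : ∀ n : ℕ, ((-1 : ℝ) ^ n * 2) * (z ^ 2 * Real.exp (-((4 * n + 2) * z)))
      = (2 * (z ^ 2 * Real.exp (-(2 * z)))) * (-Real.exp (-(4 * z))) ^ n := by
    intro n
    have h0 : (-Real.exp (-(4 * z))) ^ n = (-1 : ℝ) ^ n * Real.exp (-(4 * z)) ^ n := by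
      rw [neg_pow]
    rw [h0, ← Real.exp_nat_mul]
    rw [show ((n:ℝ) * -(4 * z)) = -((4 * n) * z) by ring]
    rw [show (-((4 * (n:ℝ) + 2) * z)) = -((4 * n) * z) + -(2 * z) by ring, Real.exp_add]
    ring
  rw [funext hterm, tsum_mul_left, geo]
  rw [Real.cosh_eq]
  have e2 : Real.exp (2 * z) * Real.exp (-(2 * z)) = 1 := by rw [← Real.exp_add]; simp
  have e1 : Real.exp (-(4 * z)) = Real.exp (-(2 * z)) * Real.exp (-(2 * z)) := by
    rw [← Real.exp_add]; ring_nf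
  have hden : (1 : ℝ) - -Real.exp (-(4 * z)) ≠ 0 := by
    rw [sub_neg_eq_add]; positivity
  have hden2 : Real.exp (2 * z) + Real.exp (-(2 * z)) ≠ 0 := by positivity
  field_simp
  rw [show z * 2 = 2 * z by ring, show z * 4 = 4 * z by ring, eq_div_iff hden, e1]
  linear_combination (-1 : ℝ) * e2

set_option maxHeartbeats 1000000 in
lemma integral_Ioi_sq_sech :
    ∫ z in Ioi (0:ℝ), z ^ 2 * (1 / Real.cosh (2 * z)) = π ^ 3 / 64 := by
  set F : ℕ → ℝ → ℝ :=
    fun n z => ((-1 : ℝ) ^ n * 2) * (z ^ 2 * Real.exp (-((4 * n + 2) * z))) with hF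
  have hc : ∀ n : ℕ, (0:ℝ) < 4 * n + 2 := fun n => by positivity
  have hint : ∀ n : ℕ, IntegrableOn (F n) (Ioi 0) := fun n =>
    (integrableOn_sq_exp (hc n)).const_mul _
  have hval : ∀ n : ℕ, ∫ z in Ioi (0:ℝ), F n z = (1 / 2) * ((-1) ^ n / (2 * n + 1) ^ 3) := by
    intro n
    rw [hF]
    simp only []
    rw [MeasureTheory.integral_const_mul, integral_Ioi_sq_exp (hc n)]
    have h8 : ((4:ℝ) * n + 2) ^ 3 = 8 * (2 * n + 1) ^ 3 := by ring
    rw [h8]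
    have hne : ((2:ℝ) * n + 1) ^ 3 ≠ 0 := by positivity
    field_simp
    ring
  have hnorm : ∀ n : ℕ, ∫ z in Ioi (0:ℝ), ‖F n z‖ = 2 * (2 / (4 * n + 2) ^ 3) := by
    intro n
    have habs : ∀ z : ℝ, ‖F n z‖ = 2 * (z ^ 2 * Real.exp (-((4 * n + 2) * z))) := by
      intro z
      rw [hF]
      simp only []
      rw [Real.norm_eq_abs, abs_mul, abs_mul, abs_pow, abs_neg, abs_one, one_pow, one_mul,
        abs_of_nonneg (by norm_num : (0:ℝ) ≤ 2), abs_of_nonneg (by positivity)]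
    simp_rw [habs]
    rw [MeasureTheory.integral_const_mul, integral_Ioi_sq_exp (hc n)]
  have hsum : Summable fun n : ℕ => ∫ z in Ioi (0:ℝ), ‖F n z‖ := by
    simp_rw [hnorm]
    have hgsum : Summable fun n : ℕ => 4 * (1 / ((n:ℝ) + 1) ^ 3) := by
      apply Summable.mul_left
      have h2 : Summable fun n : ℕ => 1 / ((n:ℝ)) ^ 3 :=
        Real.summable_one_div_nat_pow.mpr (by norm_num)
      have := (summable_nat_add_iff 1).mpr h2
      exact_mod_cast this
    refine Summable.of_nonneg_of_le (fun n => by positivity) (fun n => ?_) hgsum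
    have h1 : ((n:ℝ) + 1) ^ 3 ≤ (4 * n + 2) ^ 3 := by
      apply pow_le_pow_left₀ (by positivity)
      have : (0:ℝ) ≤ (n:ℝ) := Nat.cast_nonneg n
      linarith
    calc (2:ℝ) * (2 / (4 * n + 2) ^ 3) = 4 / (4 * n + 2) ^ 3 := by ring
      _ ≤ 4 / ((n:ℝ) + 1) ^ 3 := by gcongr <;> positivity
      _ = 4 * (1 / ((n:ℝ) + 1) ^ 3) := by ring
  have key := MeasureTheory.integral_tsum_of_summable_integral_norm hint hsum
  have hpt : ∀ z ∈ Ioi (0:ℝ), (∑' n, F n z) = z ^ 2 * (1 / Real.cosh (2 * z)) :=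
    fun z hz => (sech_series hz).symm
  rw [setIntegral_congr_fun measurableSet_Ioi hpt] at key
  rw [← key]
  have hb := (hasSum_beta3.mul_left (1/2)).tsum_eq
  simp_rw [hval]
  rw [hb]
  ring

lemma integral_sq_sech : ∫ z : ℝ, z ^ 2 * (1 / Real.cosh (2 * z)) = π ^ 3 / 32 := by
  have heven : (fun z : ℝ => z ^ 2 * (1 / Real.cosh (2 * z)))
      = fun z : ℝ => (fun t : ℝ => t ^ 2 * (1 / Real.cosh (2 * t))) |z| := by
    funext z
    simp only [sq_abs]
    rw [show Real.cosh (2 * |z|) = Real.cosh (2 * z) by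
      rw [show (2:ℝ) * |z| = |2 * z| by rw [abs_mul]; norm_num, Real.cosh_abs]]
  rw [heven,
    integral_comp_abs (f := fun t : ℝ => t ^ 2 * (1 / Real.cosh (2 * t))), integral_Ioi_sq_sech]
  ring

noncomputable def mmseBPSK (γ : ℝ) : ℝ :=
  (1 / Real.sqrt (Real.pi * γ)) * Real.exp (-γ) *
    ∫ z : ℝ, (1 / Real.cosh (2 * z)) * Real.exp (-z ^ 2 / γ)

theorem mmseBPSK_lower (γ : ℝ) (hγ : 0 < γ) :
    (1 - (1 / (2 * γ)) * (Real.pi ^ 2 / 8)) *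
        ((Real.sqrt Real.pi / 2) * (1 / Real.sqrt γ) * Real.exp (-γ)) ≤ mmseBPSK γ := by
  have hIg : Integrable fun z : ℝ => (1 / Real.cosh (2 * z)) * Real.exp (-z ^ 2 / γ) := by
    refine integrable_sech.mono' ?_ ?_
    · exact (cont_sech.mul ((Real.continuous_exp.comp
        ((continuous_pow 2).neg.div_const γ)))).aestronglyMeasurable
    · filter_upwards with z
      rw [Real.norm_eq_abs, abs_of_nonneg (by positivity)]
      have h1 : Real.exp (-z ^ 2 / γ) ≤ 1 := by
        apply Real.exp_le_one_iff.mpr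
        exact div_nonpos_of_nonpos_of_nonneg (neg_nonpos.mpr (sq_nonneg z)) hγ.le
      nlinarith [sech_pos (2 * z), sech_le_one (2 * z)]
  have hIl : Integrable fun z : ℝ =>
      1 / Real.cosh (2 * z) - z ^ 2 * (1 / Real.cosh (2 * z)) / γ :=
    integrable_sech.sub (integrable_sq_sech.div_const γ)
  have hmono : ∀ z : ℝ, 1 / Real.cosh (2 * z) - z ^ 2 * (1 / Real.cosh (2 * z)) / γ
      ≤ (1 / Real.cosh (2 * z)) * Real.exp (-z ^ 2 / γ) := by
    intro z
    have h1 : 1 - z ^ 2 / γ ≤ Real.exp (-z ^ 2 / γ) := by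
      have := Real.add_one_le_exp (-z ^ 2 / γ)
      have hrw : -z ^ 2 / γ = -(z ^ 2 / γ) := by ring
      linarith [hrw ▸ this]
    have h2 : (0:ℝ) ≤ 1 / Real.cosh (2 * z) := (sech_pos _).le
    have h3 := mul_le_mul_of_nonneg_left h1 h2
    calc 1 / Real.cosh (2 * z) - z ^ 2 * (1 / Real.cosh (2 * z)) / γ
        = (1 / Real.cosh (2 * z)) * (1 - z ^ 2 / γ) := by ring
      _ ≤ (1 / Real.cosh (2 * z)) * Real.exp (-z ^ 2 / γ) := h3
  have hInt := MeasureTheory.integral_mono hIl hIg hmono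
  have hval : (∫ z : ℝ, (1 / Real.cosh (2 * z) - z ^ 2 * (1 / Real.cosh (2 * z)) / γ))
      = π / 2 - (π ^ 3 / 32) / γ := by
    rw [MeasureTheory.integral_sub integrable_sech (integrable_sq_sech.div_const γ),
      MeasureTheory.integral_div, integral_sech, integral_sq_sech]
  rw [hval] at hInt
  have hc : (0:ℝ) < (1 / Real.sqrt (Real.pi * γ)) * Real.exp (-γ) := by
    have : (0:ℝ) < Real.sqrt (Real.pi * γ) := Real.sqrt_pos.mpr (by positivity)
    positivity
  have hkey : (1 - (1 / (2 * γ)) * (Real.pi ^ 2 / 8)) *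
        ((Real.sqrt Real.pi / 2) * (1 / Real.sqrt γ) * Real.exp (-γ))
      = (1 / Real.sqrt (Real.pi * γ)) * Real.exp (-γ) * (π / 2 - (π ^ 3 / 32) / γ) := by
    rw [Real.sqrt_mul Real.pi_pos.le]
    set s := Real.sqrt π with hs
    set t := Real.sqrt γ with ht
    have hsπ : (0:ℝ) < s := Real.sqrt_pos.mpr Real.pi_pos
    have hsγ : (0:ℝ) < t := Real.sqrt_pos.mpr hγ
    have hππ : s ^ 2 = π := Real.sq_sqrt Real.pi_pos.le
    have hγγ : t ^ 2 = γ := Real.sq_sqrt hγ.le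
    rw [← hππ, ← hγγ]
    field_simp
    ring
  rw [hkey, mmseBPSK]
  exact mul_le_mul_of_nonneg_left hInt hc.le
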